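/- arXiv:2207.02535 — 4 statements merged into one kernel-verified Lean document; each statement's English description precedes it below -/
import Mathlib

section
/- Let C be a k-dimensional linear code in F_q^n with generator matrix G, and let 0 ≤ e ≤ h−1. Then the rank of the k×k matrix G·σ^{h−e}(G^T) (over F_q) equals k − dim(Hull_e(C)); in particular this rank is the same for every choice of generator matrix G of C. -/
open Finset

variable {F : Type*}

/-- The `e`-Galois dual of a linear code `C ⊆ F_q^n` (`q = p^h`):
`C^{⊥_e} = {x | ∀ c ∈ C, ∑ i, x i * (c i)^(p^e) = 0}`. -/
def galoisDual [Field F] (p e : ℕ) {n : ℕ} (C : Submodule F (Fin n → F)) :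
    Submodule F (Fin n → F) where
  carrier := {x | ∀ c ∈ C, ∑ i, x i * c i ^ p ^ e = 0}
  add_mem' := by
    intro a b ha hb c hc
    have h1 := ha c hc
    have h2 := hb c hc
    try simp only [Set.mem_setOf_eq] at h1 h2 ⊢
    simp only [Pi.add_apply, add_mul, Finset.sum_add_distrib, h1, h2, add_zero]
  zero_mem' := by
    intro c hc
    simp
  smul_mem' := by
    intro r a ha c hc
    have h1 := ha c hc
    try simp only [Set.mem_setOf_eq] at h1 ⊢
    simp only [Pi.smul_apply, smul_eq_mul, mul_assoc, ← Finset.mul_sum, h1, mul_zero]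

/-- The `e`-Galois hull of `C`: `Hull_e(C) = C ∩ C^{⊥_e}`. -/
def galoisHull [Field F] (p e : ℕ) {n : ℕ} (C : Submodule F (Fin n → F)) :
    Submodule F (Fin n → F) :=
  C ⊓ galoisDual p e C

/-- `G` is a generator matrix of `C`: its rows form a basis of `C`. -/
def IsGenMatrix [Field F] {n k : ℕ} (C : Submodule F (Fin n → F))
    (G : Matrix (Fin k) (Fin n) F) : Prop :=
  LinearIndependent F (fun i : Fin k => G i) ∧
    Submodule.span F (Set.range fun i : Fin k => G i) = C

/-- `d` is the minimum (Hamming) distance of the linear code `C`. -/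
def IsMinDist [Field F] [DecidableEq F] {n : ℕ} (C : Submodule F (Fin n → F)) (d : ℕ) : Prop :=
  (∃ c ∈ C, c ≠ 0 ∧ hammingNorm c = d) ∧ ∀ c ∈ C, c ≠ 0 → d ≤ hammingNorm c

/-- Lemma 8 (new rank formula): for any generator matrix `G` of a `k`-dimensional code `C`,
`rank (G · σ^{h-e}(Gᵀ)) = k - dim Hull_e(C)`; in particular the rank does not depend on `G`. -/
theorem rank_mul_frobenius_transpose_eq_dim_sub_hull
    (p h : ℕ) (hp : p.Prime) (hh : 0 < h)
    [Field F] [Fintype F] (hcard : Fintype.card F = p ^ h)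
    (n k e : ℕ) (he : e ≤ h - 1)
    (C : Submodule F (Fin n → F)) (hk : Module.finrank F C = k)
    (G : Matrix (Fin k) (Fin n) F) (hG : IsGenMatrix C G) :
    (G * (G.transpose.map fun a => a ^ p ^ (h - e))).rank
      = k - Module.finrank F (galoisHull p e C) := by
  classical
  have hFp : Fact p.Prime := ⟨hp⟩
  have hchar : CharP F p := by
    have h1 : p ∣ Fintype.card F := hcard ▸ dvd_pow_self p hh.ne'
    have h2 : p ∣ ringChar F := (prime_dvd_char_iff_dvd_card p).mpr h1
    have h3 : (ringChar F).Prime := CharP.char_is_prime F (ringChar F)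
    exact ((Nat.prime_dvd_prime_iff_eq hp h3).mp h2) ▸ ringChar.charP F
  have hpow_card : ∀ a : F, a ^ p ^ h = a := by
    intro a; rw [← hcard]; exact FiniteField.pow_card a
  set m := h - e with hmdef
  have hem : e + m = h := by omega
  have hm0 : p ^ m ≠ 0 := (pow_pos hp.pos m).ne'
  have hpe : ∀ x : F, (x ^ p ^ e) ^ p ^ m = x := fun x => by
    rw [← pow_mul, ← pow_add, hem, hpow_card]
  have hpm : ∀ x : F, (x ^ p ^ m) ^ p ^ e = x := fun x => by
    rw [← pow_mul, ← pow_add, Nat.add_comm, hem, hpow_card]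
  set M := G * (G.transpose.map fun a => a ^ p ^ m) with hMdef
  set L := G.vecMulLinear with hLdef
  have hLapp : ∀ (a : Fin k → F) (t : Fin n), L a t = ∑ j, a j * G j t := by
    intro a t
    simp [hLdef, Matrix.vecMulLinear_apply, Matrix.vecMul, dotProduct]
  have hrange : LinearMap.range L = C := by
    rw [hLdef, range_vecMulLinear]; exact hG.2
  have hinj : Function.Injective L := by
    rw [← LinearMap.ker_eq_bot, LinearMap.ker_eq_bot']
    intro a ha
    have h2 : ∑ j, a j • G j = 0 := by
      funext t
      have := congrFun ha t
      rw [hLapp] at this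
      simpa [Finset.sum_apply] using this
    exact funext (Fintype.linearIndependent_iff.mp hG.1 a h2)
  have key : ∀ (a : Fin k → F) (i : Fin k),
      (∑ t, L a t * G i t ^ p ^ e) ^ p ^ m
        = M.mulVec (fun j => a j ^ p ^ m) i := by
    intro a i
    have hterm : ∀ t, (L a t * G i t ^ p ^ e) ^ p ^ m
        = ∑ j, (a j ^ p ^ m * G j t ^ p ^ m) * G i t := by
      intro t
      rw [mul_pow, hpe, hLapp, sum_pow_char_pow, Finset.sum_mul]
      exact Finset.sum_congr rfl fun j _ => by rw [mul_pow]
    have hR : M.mulVec (fun j => a j ^ p ^ m) i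
        = ∑ j, ∑ t, (a j ^ p ^ m * G j t ^ p ^ m) * G i t := by
      simp only [Matrix.mulVec, dotProduct, hMdef, Matrix.mul_apply,
        Matrix.map_apply, Matrix.transpose_apply, Finset.sum_mul]
      exact Finset.sum_congr rfl fun j _ => Finset.sum_congr rfl fun t _ => by ring
    rw [sum_pow_char_pow, hR]
    simp_rw [hterm]
    exact Finset.sum_comm
  have hdualmem : ∀ x : Fin n → F,
      x ∈ galoisDual p e C ↔ ∀ c ∈ C, ∑ i, x i * c i ^ p ^ e = 0 := fun x => Iff.rfl
  have hdual : ∀ a : Fin k → F,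
      L a ∈ galoisDual p e C ↔ M.mulVec (fun j => a j ^ p ^ m) = 0 := by
    intro a
    rw [hdualmem]
    constructor
    · intro hd
      funext i
      have hGi : G i ∈ C := by
        rw [← hG.2]; exact Submodule.subset_span ⟨i, rfl⟩
      have h0 := hd (G i) hGi
      rw [Pi.zero_apply, ← key a i, h0, zero_pow hm0]
    · intro h0 c hc
      have hbase : ∀ i : Fin k, ∑ t, L a t * G i t ^ p ^ e = 0 := by
        intro i
        have hk2 := key a i
        rw [h0, Pi.zero_apply] at hk2
        exact pow_eq_zero_iff hm0 |>.mp hk2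
      have hc' : c ∈ Submodule.span F (Set.range fun i : Fin k => G i) := by
        rw [hG.2]; exact hc
      clear hc
      induction hc' using Submodule.span_induction with
      | mem x hx => obtain ⟨i, rfl⟩ := hx; exact hbase i
      | zero => simp [zero_pow (pow_pos hp.pos e).ne']
      | add x y hx hy ihx ihy =>
        have : ∀ t, L a t * (x + y) t ^ p ^ e
            = L a t * x t ^ p ^ e + L a t * y t ^ p ^ e := by
          intro t
          rw [Pi.add_apply, add_pow_char_pow, mul_add]
        simp_rw [this]
        rw [Finset.sum_add_distrib, ihx, ihy, add_zero]
      | smul r x hx ihx =>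
        have : ∀ t, L a t * (r • x) t ^ p ^ e
            = r ^ p ^ e * (L a t * x t ^ p ^ e) := by
          intro t
          rw [Pi.smul_apply, smul_eq_mul, mul_pow]; ring
        simp_rw [this]
        rw [← Finset.mul_sum, ihx, mul_zero]
  have hHle : galoisHull p e C ≤ C := inf_le_left
  set S := Submodule.comap L (galoisHull p e C) with hSdef
  have hmemS : ∀ a, a ∈ S ↔ M.mulVec (fun j => a j ^ p ^ m) = 0 := by
    intro a
    rw [hSdef, Submodule.mem_comap]
    have haC : L a ∈ C := hrange ▸ LinearMap.mem_range_self L a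
    rw [galoisHull, Submodule.mem_inf]
    simp [haC, hdual a]
  set K := LinearMap.ker (M.mulVecLin) with hKdef
  have hmemK : ∀ b, b ∈ K ↔ M.mulVec b = 0 := by
    intro b
    rw [hKdef, LinearMap.mem_ker, Matrix.mulVecLin_apply]
  have equivSK : ↥S ≃ ↥K :=
    { toFun := fun a => ⟨fun j => (a : Fin k → F) j ^ p ^ m, by
        rw [hmemK]; exact (hmemS a).mp a.2⟩
      invFun := fun b => ⟨fun j => (b : Fin k → F) j ^ p ^ e, by
        rw [hmemS]
        have hb : (fun j => ((b : Fin k → F) j ^ p ^ e) ^ p ^ m)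
            = (b : Fin k → F) := funext fun j => hpe _
        rw [hb]; exact (hmemK _).mp b.2⟩
      left_inv := fun a => Subtype.ext (funext fun j => hpm _)
      right_inv := fun b => Subtype.ext (funext fun j => hpe _) }
  haveI : Fintype ↥S := Fintype.ofFinite _
  haveI : Fintype ↥K := Fintype.ofFinite _
  have hcardSK : Fintype.card ↥S = Fintype.card ↥K := Fintype.card_congr equivSK
  have hfinSK : Module.finrank F ↥S = Module.finrank F ↥K := by
    have h1 : Fintype.card ↥S = Fintype.card F ^ Module.finrank F ↥S :=
      Module.card_eq_pow_finrank
    have h2 : Fintype.card ↥K = Fintype.card F ^ Module.finrank F ↥K :=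
      Module.card_eq_pow_finrank
    rw [h1, h2] at hcardSK
    exact Nat.pow_right_injective Fintype.one_lt_card hcardSK
  have hmapS : Submodule.map L S = galoisHull p e C := by
    rw [hSdef, Submodule.map_comap_eq, hrange]
    exact inf_eq_right.mpr hHle
  have hfinSH : Module.finrank F ↥S = Module.finrank F (galoisHull p e C) := by
    rw [← hmapS]
    exact (Submodule.equivMapOfInjective L hinj S).finrank_eq
  have hrank : M.rank + Module.finrank F ↥K = k := by
    rw [Matrix.rank, hKdef]
    have h5 := LinearMap.finrank_range_add_finrank_ker (M.mulVecLin)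
    rwa [Module.finrank_fin_fun] at h5
  omega
end

section
/- Let C be a linear code in F_q^n. Then for every integer e with 0 ≤ e ≤ h−1, dim(Hull_e(C)) = dim(Hull_e(C^{⊥_e})), i.e., the e-Galois hull of C and the e-Galois hull of its e-Galois dual code have equal dimension. -/
open Finset

variable {F : Type*}

set_option linter.unusedSectionVars false

section Aux

open Module LinearMap

variable [Field F] [Fintype F]

/-- The standard dot-product bilinear form on `Fin n → F`. -/
def dotForm (F : Type*) [Field F] (n : ℕ) : LinearMap.BilinForm F (Fin n → F) :=
  LinearMap.mk₂ F (fun x y => ∑ i, x i * y i)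
    (by intro x x' y; simp [add_mul, Finset.sum_add_distrib])
    (by intro a x y; simp [Finset.mul_sum, mul_assoc])
    (by intro x y y'; simp [mul_add, Finset.sum_add_distrib])
    (by intro a x y; simp [Finset.mul_sum]; ring_nf; simp [mul_comm, mul_left_comm])

lemma dotForm_apply {n : ℕ} (x y : Fin n → F) : dotForm F n x y = ∑ i, x i * y i := rfl

lemma dotForm_isRefl {n : ℕ} : (dotForm F n).IsRefl := by
  intro x y hxy
  rw [dotForm_apply] at hxy ⊢
  rw [← hxy]
  exact Finset.sum_congr rfl fun i _ => mul_comm _ _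

lemma dotForm_nondeg {n : ℕ} : (dotForm F n).Nondegenerate := by
  refine (LinearMap.IsRefl.nondegenerate_iff_separatingLeft (B := dotForm F n) dotForm_isRefl).mpr ?_
  intro x hx
  funext i
  have h := hx (Pi.single i 1)
  rw [dotForm_apply] at h
  have hs : ∑ j, x j * (Pi.single i 1 : Fin n → F) j = x i := by
    rw [Finset.sum_eq_single i]
    · simp
    · intro b _ hb
      simp [Pi.single_apply, hb]
    · simp
  rw [hs] at h
  simpa using h

/-- The image of a submodule under the coordinatewise ring hom `σ`. -/
def frobSub {n : ℕ} (σ : F →+* F) (hs : Function.Surjective σ)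
    (D : Submodule F (Fin n → F)) : Submodule F (Fin n → F) where
  carrier := (fun x : Fin n → F => fun i => σ (x i)) '' D
  add_mem' := by
    rintro _ _ ⟨a, ha, rfl⟩ ⟨b, hb, rfl⟩
    exact ⟨a + b, D.add_mem ha hb, by funext i; simp [map_add]⟩
  zero_mem' := ⟨0, D.zero_mem, by funext i; simp⟩
  smul_mem' := by
    rintro r _ ⟨a, ha, rfl⟩
    obtain ⟨s, rfl⟩ := hs r
    exact ⟨s • a, D.smul_mem s ha, by funext i; simp [map_mul]⟩

lemma finrank_frobSub {p h : ℕ} (hp : p.Prime) (hh : 0 < h)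
    (hcard : Fintype.card F = p ^ h) {n : ℕ} (σ : F →+* F) (hs : Function.Surjective σ)
    (D : Submodule F (Fin n → F)) :
    finrank F (frobSub σ hs D) = finrank F D := by
  classical
  haveI : Fintype (frobSub σ hs D) := Fintype.ofFinite _
  haveI : Fintype D := Fintype.ofFinite _
  have hinj : Function.Injective (fun x : Fin n → F => fun i => σ (x i)) := by
    intro a b hab
    funext i
    exact σ.injective (congrFun hab i)
  have hcardset : Nat.card ((frobSub σ hs D : Set (Fin n → F)))
      = Nat.card (D : Set (Fin n → F)) := by
    have hc : (frobSub σ hs D : Set (Fin n → F))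
        = (fun x : Fin n → F => fun i => σ (x i)) '' D := rfl
    rw [hc, Nat.card_image_of_injective hinj]
  have h1 : Fintype.card (frobSub σ hs D) = Fintype.card F ^ finrank F (frobSub σ hs D) :=
    card_eq_pow_finrank
  have h2 : Fintype.card D = Fintype.card F ^ finrank F D := card_eq_pow_finrank
  have hc : Fintype.card (frobSub σ hs D) = Fintype.card D := by
    rw [← Nat.card_eq_fintype_card, ← Nat.card_eq_fintype_card]
    exact hcardset
  rw [h1, h2] at hc
  exact Nat.pow_right_injective Fintype.one_lt_card hc

lemma charP_of_card {p h : ℕ} (hp : p.Prime) (hh : 0 < h)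
    (hcard : Fintype.card F = p ^ h) : CharP F p := by
  haveI : CharP F (ringChar F) := ringChar.charP F
  obtain ⟨m, hrp, hcm⟩ := FiniteField.card F (ringChar F)
  have hdvd : ringChar F ∣ p ^ h := by
    rw [← hcard, hcm]
    exact dvd_pow_self _ m.ne_zero
  have hre : ringChar F = p :=
    (Nat.prime_dvd_prime_iff_eq hrp hp).mp (hrp.dvd_of_dvd_pow hdvd)
  exact ringChar.of_eq hre

lemma galoisDual_eq_orthogonal {p h : ℕ} (hp : p.Prime) (hh : 0 < h)
    (hcard : Fintype.card F = p ^ h) {n : ℕ} (e : ℕ) (D : Submodule F (Fin n → F))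
    (σ : F →+* F) (hσ : ∀ x : F, σ x = x ^ p ^ e) (hs : Function.Surjective σ) :
    galoisDual p e D = (dotForm F n).orthogonal (frobSub σ hs D) := by
  ext x
  have key : ∀ c : Fin n → F, (dotForm F n) (fun i => σ (c i)) x = ∑ i, x i * c i ^ p ^ e := by
    intro c
    rw [dotForm_apply]
    exact Finset.sum_congr rfl fun i _ => by simp [hσ, mul_comm]
  constructor
  · rintro hx _ ⟨c, hc, rfl⟩
    show dotForm F n (fun i => σ (c i)) x = 0
    rw [key c]
    exact hx c hc
  · intro hx c hc
    have h : dotForm F n (fun i => σ (c i)) x = 0 := hx (fun i => σ (c i)) ⟨c, hc, rfl⟩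
    rw [key c] at h
    exact h

lemma finrank_add_finrank_galoisDual {p h : ℕ} (hp : p.Prime) (hh : 0 < h)
    (hcard : Fintype.card F = p ^ h) {n : ℕ} (e : ℕ) (D : Submodule F (Fin n → F)) :
    finrank F D + finrank F (galoisDual p e D) = n := by
  haveI : CharP F p := charP_of_card hp hh hcard
  haveI : ExpChar F p := ExpChar.prime hp
  set σ := iterateFrobenius F p e with hσdef
  have hσ : ∀ x : F, σ x = x ^ p ^ e := fun x => iterateFrobenius_def p e x
  have hs : Function.Surjective σ := Finite.surjective_of_injective σ.injective
  rw [galoisDual_eq_orthogonal hp hh hcard e D σ hσ hs]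
  rw [LinearMap.BilinForm.finrank_orthogonal dotForm_nondeg]
  rw [finrank_frobSub hp hh hcard σ hs D]
  have h1 : finrank F D ≤ finrank F (Fin n → F) := Submodule.finrank_le D
  simp only [Module.finrank_pi, Fintype.card_fin] at *
  omega

lemma galoisDual_sup {p h : ℕ} (hp : p.Prime) (hh : 0 < h)
    (hcard : Fintype.card F = p ^ h) {n : ℕ} (e : ℕ) (A B : Submodule F (Fin n → F)) :
    galoisDual p e (A ⊔ B) = galoisDual p e A ⊓ galoisDual p e B := by
  haveI : CharP F p := charP_of_card hp hh hcard
  haveI : Fact p.Prime := ⟨hp⟩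
  apply le_antisymm
  · exact le_inf (fun x hx c hc => hx c (Submodule.mem_sup_left hc))
      (fun x hx c hc => hx c (Submodule.mem_sup_right hc))
  · intro x hx
    obtain ⟨h1, h2⟩ := Submodule.mem_inf.mp hx
    intro c hc
    obtain ⟨a, ha, b, hb, rfl⟩ := Submodule.mem_sup.mp hc
    have ha' := h1 a ha
    have hb' := h2 b hb
    show ∑ i, x i * (a + b) i ^ p ^ e = 0
    calc ∑ i, x i * (a + b) i ^ p ^ e
        = ∑ i, (x i * a i ^ p ^ e + x i * b i ^ p ^ e) := by
          refine Finset.sum_congr rfl fun i _ => ?_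
          rw [Pi.add_apply, add_pow_char_pow, mul_add]
      _ = 0 := by rw [Finset.sum_add_distrib, ha', hb', add_zero]

end Aux

/-- Corollary: `dim Hull_e(C) = dim Hull_e(C^{⊥_e})` for every `0 ≤ e ≤ h - 1`. -/
theorem finrank_galoisHull_eq_finrank_galoisHull_dual
    (p h : ℕ) (hp : p.Prime) (hh : 0 < h)
    [Field F] [Fintype F] (hcard : Fintype.card F = p ^ h)
    (n e : ℕ) (he : e ≤ h - 1)
    (C : Submodule F (Fin n → F)) :
    Module.finrank F (galoisHull p e C)
      = Module.finrank F (galoisHull p e (galoisDual p e C)) := by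
  have hd := finrank_add_finrank_galoisDual hp hh hcard e C
  have hd2 := finrank_add_finrank_galoisDual hp hh hcard e (C ⊔ galoisDual p e C)
  have hsup := Submodule.finrank_sup_add_finrank_inf_eq C (galoisDual p e C)
  have hkey : galoisHull p e (galoisDual p e C) = galoisDual p e (C ⊔ galoisDual p e C) := by
    rw [galoisDual_sup hp hh hcard e C (galoisDual p e C)]
    rfl
  rw [hkey]
  show Module.finrank F ↥(C ⊓ galoisDual p e C) = _
  have hle : Module.finrank F ↥(C ⊔ galoisDual p e C) ≤ n := by
    simpa [Module.finrank_pi] using Submodule.finrank_le (C ⊔ galoisDual p e C)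
  omega
end

section
/- Let q = p^h be an odd prime power and let ω be a primitive element of F_q (a generator of the multiplicative group F_q^*). Let 0 ≤ e ≤ h−1. If either (1) h/gcd(e,h) is odd and (p^h−1)/2 is even, or (2) h/gcd(e,h) is even and (p^{gcd(e,h)}+1) divides (p^h−1)/2, then there exists an integer t_0 such that ω^{t_0(p^e+1)} = −1. -/
open Finset

variable {F : Type*}

lemma aux_dvd_pow_gcd_sub_one (p a b d : ℕ)
    (ha : (d:ℤ) ∣ (p:ℤ)^a - 1) (hb : (d:ℤ) ∣ (p:ℤ)^b - 1) :
    (d:ℤ) ∣ (p:ℤ)^(Nat.gcd a b) - 1 := by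
  have key : ∀ n : ℕ, ((d:ℤ) ∣ (p:ℤ)^n - 1) ↔ ((p : ZMod d)^n = 1) := by
    intro n
    rw [← ZMod.intCast_zmod_eq_zero_iff_dvd]
    push_cast
    rw [sub_eq_zero]
  rw [key] at ha hb ⊢
  exact orderOf_dvd_iff_pow_eq_one.mp
    (Nat.dvd_gcd (orderOf_dvd_of_pow_eq_one ha) (orderOf_dvd_of_pow_eq_one hb))

/-- The key arithmetic fact: `gcd(p^e+1, p^h-1)` divides `(p^h-1)/2`. -/
lemma aux_gcd_dvd_half (p h e : ℕ) (hp : p.Prime) (hpodd : Odd p) (hh : 0 < h)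
    (hcond : (Odd (h / Nat.gcd e h) ∧ Even ((p ^ h - 1) / 2)) ∨
      (Even (h / Nat.gcd e h) ∧ (p ^ Nat.gcd e h + 1) ∣ ((p ^ h - 1) / 2))) :
    Nat.gcd (p ^ e + 1) (p ^ h - 1) ∣ (p ^ h - 1) / 2 := by
  set g := Nat.gcd e h with hg
  set d := Nat.gcd (p ^ e + 1) (p ^ h - 1) with hd
  have hph1 : 1 ≤ p ^ h := Nat.one_le_pow _ _ hp.pos
  have hgpos : 0 < g := Nat.gcd_pos_of_pos_right _ hh
  have he' : e = g * (e / g) := (Nat.mul_div_cancel' (Nat.gcd_dvd_left e h)).symm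
  have hh' : h = g * (h / g) := (Nat.mul_div_cancel' (Nat.gcd_dvd_right e h)).symm
  have hcop : Nat.Coprime (e / g) (h / g) := Nat.coprime_div_gcd_div_gcd hgpos
  -- d divides p^e+1 and p^h-1 (as integers)
  have hd1 : (d:ℤ) ∣ (p:ℤ)^e + 1 := by
    have := Int.natCast_dvd_natCast.mpr (Nat.gcd_dvd_left (p ^ e + 1) (p ^ h - 1))
    push_cast at this
    exact this
  have hd2 : (d:ℤ) ∣ (p:ℤ)^h - 1 := by
    have := Int.natCast_dvd_natCast.mpr (Nat.gcd_dvd_right (p ^ e + 1) (p ^ h - 1))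
    rw [Nat.cast_sub hph1] at this
    push_cast at this
    exact this
  have hd2e : (d:ℤ) ∣ (p:ℤ)^(2*e) - 1 :=
    hd1.trans ⟨(p:ℤ)^e - 1, by ring⟩
  have hdg : (d:ℤ) ∣ (p:ℤ)^(Nat.gcd (2*e) h) - 1 := aux_dvd_pow_gcd_sub_one _ _ _ _ hd2e hd2
  have hgcd2 : Nat.gcd (2*e) h = g * Nat.gcd 2 (h / g) := by
    conv_lhs => rw [he', hh', ← mul_assoc, mul_comm 2 g, mul_assoc, Nat.gcd_mul_left]
    congr 1
    rw [mul_comm]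
    exact Nat.Coprime.gcd_mul_left_cancel 2 hcop
  rcases hcond with ⟨hodd, heven⟩ | ⟨heven, hdvd⟩
  · -- case 1: h/g odd, d ∣ 2 ∣ (p^h-1)/2
    have h2 : Nat.gcd 2 (h / g) = 1 := by
      rcases hodd with ⟨k, hk⟩
      rw [Nat.gcd_rec, hk, show (2*k+1) % 2 = 1 from by omega, Nat.gcd_one_left]
    rw [hgcd2, h2, mul_one] at hdg
    have hdge : (d:ℤ) ∣ (p:ℤ)^e - 1 := by
      refine hdg.trans ?_
      have := sub_dvd_pow_sub_pow ((p:ℤ)^g) 1 (e / g)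
      rw [one_pow, ← pow_mul, ← he'] at this
      exact this
    have hdvd2 : (d:ℤ) ∣ 2 := by
      have := hd1.sub hdge
      rwa [show (p:ℤ)^e + 1 - ((p:ℤ)^e - 1) = 2 from by ring] at this
    have hdvd2' : d ∣ 2 := by exact_mod_cast hdvd2
    exact hdvd2'.trans heven.two_dvd
  · -- case 2: h/g even, d ∣ p^g+1 ∣ (p^h-1)/2
    have h2 : Nat.gcd 2 (h / g) = 2 := Nat.gcd_eq_left heven.two_dvd
    rw [hgcd2, h2] at hdg
    have heodd : Odd (e / g) := by
      rcases Nat.even_or_odd (e / g) with hev | hod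
      · exfalso
        have h2' : 2 ∣ Nat.gcd (e/g) (h/g) := Nat.dvd_gcd hev.two_dvd heven.two_dvd
        rw [hcop] at h2'
        omega
      · exact hod
    rcases heodd with ⟨k, hk⟩
    have hpe : (p:ℤ)^e = (p:ℤ)^g * ((p:ℤ)^(g*2))^k := by
      rw [he', hk, show g * (2*k+1) = g + (g*2)*k from by ring, pow_add, pow_mul]
    have h2k : (d:ℤ) ∣ ((p:ℤ)^(g*2))^k - 1 := by
      refine hdg.trans ?_
      have := sub_dvd_pow_sub_pow ((p:ℤ)^(g*2)) 1 k
      rwa [one_pow] at this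
    have h3 : (d:ℤ) ∣ (p:ℤ)^g + 1 := by
      have h4 : (d:ℤ) ∣ (p:ℤ)^g * (((p:ℤ)^(g*2))^k - 1) := h2k.mul_left _
      have h5 := hd1.sub h4
      rwa [show (p:ℤ)^e + 1 - ((p:ℤ)^g * (((p:ℤ)^(g*2))^k - 1)) = (p:ℤ)^g + 1 from by
        rw [hpe]; ring] at h5
    have h3' : d ∣ p^g + 1 := by exact_mod_cast h3
    exact h3'.trans hdvd


lemma aux_main (p h : ℕ) (hp : p.Prime) (hpodd : Odd p) (hh : 0 < h)
    {F : Type*} [Field F] [Fintype F] (hcard : Fintype.card F = p ^ h)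
    (ω : F) (hω : ∀ x : F, x ≠ 0 → ∃ m : ℕ, x = ω ^ m)
    (e : ℕ)
    (hdvd : Nat.gcd (p ^ e + 1) (p ^ h - 1) ∣ (p ^ h - 1) / 2) :
    ∃ t₀ : ℤ, ω ^ (t₀ * ((p : ℤ) ^ e + 1)) = -1 := by
  classical
  set N := p ^ h - 1 with hN
  have hp3 : 3 ≤ p := by
    have := hp.two_le
    rcases Nat.lt_or_ge p 3 with h3 | h3
    · interval_cases p
      · exact absurd hpodd (by decide)
    · exact h3
  have hph3 : 3 ≤ p ^ h := le_trans hp3 (Nat.le_self_pow hh.ne' p)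
  have hNpos : 0 < N := by omega
  -- ω ≠ 0
  have hω0 : ω ≠ 0 := by
    intro h0
    have hsub : (Finset.univ : Finset F) ⊆ {0, 1} := by
      intro x _
      by_cases hx : x = 0
      · simp [hx]
      · obtain ⟨m, hm⟩ := hω x hx
        rw [h0] at hm
        cases m with
        | zero => simp [hm]
        | succ n =>
          rw [zero_pow (Nat.succ_ne_zero n)] at hm
          exact absurd hm hx
    have hle := Finset.card_le_card hsub
    rw [Finset.card_univ, hcard] at hle
    have : ({0, 1} : Finset F).card ≤ 2 :=
      le_trans (Finset.card_insert_le _ _) (by simp)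
    omega
  set u : Fˣ := Units.mk0 ω hω0 with hu
  have hforall : ∀ v : Fˣ, v ∈ Subgroup.zpowers u := by
    intro v
    obtain ⟨m, hm⟩ := hω (v : F) (Units.ne_zero v)
    refine ⟨(m : ℤ), Units.ext ?_⟩
    rw [Units.val_zpow_eq_zpow_val, zpow_natCast]
    exact hm.symm
  have horder : orderOf u = N := by
    rw [orderOf_eq_card_of_forall_mem_zpowers hforall, Nat.card_eq_fintype_card,
      Fintype.card_units, hcard]
  have huN : u ^ N = 1 := by rw [← horder]; exact pow_orderOf_eq_one u
  have hNeven : Even N := Nat.Odd.sub_odd (hpodd.pow) odd_one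
  have h2N : N / 2 * 2 = N := Nat.div_mul_cancel hNeven.two_dvd
  -- u ^ (N/2) = -1
  have hNhalf : u ^ (N / 2) = -1 := by
    have hx2 : (u ^ (N / 2)) ^ 2 = 1 := by rw [← pow_mul, h2N]; exact huN
    have hx1 : u ^ (N / 2) ≠ 1 := by
      intro hc
      have hdd := orderOf_dvd_of_pow_eq_one hc
      rw [horder] at hdd
      have := Nat.le_of_dvd (by omega) hdd
      omega
    have h2 : ((u ^ (N / 2) : Fˣ) : F) ^ 2 = 1 := by
      rw [← Units.val_pow_eq_pow_val, hx2, Units.val_one]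
    have h1 : ((u ^ (N / 2) : Fˣ) : F) ≠ 1 := fun hc =>
      hx1 (Units.ext (by rw [hc, Units.val_one]))
    have hfac : (((u ^ (N / 2) : Fˣ) : F) - 1) * (((u ^ (N / 2) : Fˣ) : F) + 1) = 0 := by
      linear_combination h2
    rcases mul_eq_zero.mp hfac with hc | hc
    · exact absurd (sub_eq_zero.mp hc) h1
    · exact Units.ext (by rw [Units.val_neg, Units.val_one]; exact eq_neg_of_add_eq_zero_left hc)
  -- Bezout
  set d := Nat.gcd (p ^ e + 1) N with hdd
  set A := Nat.gcdA (p ^ e + 1) N with hA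
  set B := Nat.gcdB (p ^ e + 1) N with hB
  have hbez : (d : ℤ) = ((p : ℤ) ^ e + 1) * A + (N : ℤ) * B := by
    have := Nat.gcd_eq_gcd_ab (p ^ e + 1) N
    push_cast at this
    push_cast
    linarith [this]
  obtain ⟨m, hm⟩ : ∃ m, N / 2 = d * m := ⟨N / 2 / d, (Nat.mul_div_cancel' hdvd).symm⟩
  refine ⟨A * m, ?_⟩
  have hmz : ((N / 2 : ℕ) : ℤ) = (d : ℤ) * m := by exact_mod_cast hm
  have key : (A * m) * ((p : ℤ) ^ e + 1) = ((N / 2 : ℕ) : ℤ) + (N : ℤ) * (-(B * m)) := by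
    rw [hmz]
    linear_combination -(m : ℤ) * hbez
  have hval : ω = (u : F) := rfl
  rw [hval, ← Units.val_zpow_eq_zpow_val]
  have : u ^ ((A * m) * ((p : ℤ) ^ e + 1)) = -1 := by
    rw [key, zpow_add, zpow_natCast, hNhalf, zpow_mul, zpow_natCast, huN, one_zpow, mul_one]
  rw [this, Units.val_neg, Units.val_one]

/-- Lemma: if `q = p^h` is odd and `ω` is a primitive element of `F_q`, then under either
condition (1) `h/gcd(e,h)` odd and `(p^h-1)/2` even, or (2) `h/gcd(e,h)` even and
`(p^{gcd(e,h)}+1) ∣ (p^h-1)/2`, there is an integer `t₀` with `ω^{t₀(p^e+1)} = -1`. -/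
theorem exists_t0_pow_eq_neg_one
    (p h : ℕ) (hp : p.Prime) (hpodd : Odd p) (hh : 0 < h)
    [Field F] [Fintype F] (hcard : Fintype.card F = p ^ h)
    (ω : F) (hω : ∀ x : F, x ≠ 0 → ∃ m : ℕ, x = ω ^ m)
    (e : ℕ) (he : e ≤ h - 1)
    (hcond : (Odd (h / Nat.gcd e h) ∧ Even ((p ^ h - 1) / 2)) ∨
      (Even (h / Nat.gcd e h) ∧ (p ^ Nat.gcd e h + 1) ∣ ((p ^ h - 1) / 2))) :
    ∃ t₀ : ℤ, ω ^ (t₀ * ((p : ℤ) ^ e + 1)) = -1 := by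
  exact aux_main p h hp hpodd hh hcard ω hω e (aux_gcd_dvd_half p h e hp hpodd hh hcond)
end

section
/- Let q = p^h with h even and write √q = p^{h/2}. Let n' be a positive divisor of q−1, set n_1 = n'/gcd(n', √q+1), let t be an integer with 1 ≤ t ≤ (√q−1)/n_1, and set n = t·n'. Then for every integer k with 1 ≤ k ≤ ⌊(√q + n'(t−1))/(√q+1)⌋ there exists a Hermitian self-orthogonal linear code in F_q^n of dimension k and minimum distance n − k + 1 (in particular, an MDS code). -/
open Finset

variable {F : Type*}

section Auxiliary

open Polynomial Lagrange

lemma charP_of_card_aux {p h : ℕ} (hp : p.Prime) (hh : 0 < h) [Field F] [Fintype F]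
    (hcard : Fintype.card F = p ^ h) : CharP F p := by
  obtain ⟨r, hr⟩ := CharP.exists F
  haveI := hr
  obtain ⟨m, hrp, hc⟩ := FiniteField.card F r
  have hdvd : p ∣ r ^ (m : ℕ) := by
    rw [← hc, hcard]
    exact dvd_pow_self p hh.ne'
  have : p = r := (Nat.prime_dvd_prime_iff_eq hp hrp).mp (hp.dvd_of_dvd_pow hdvd)
  rwa [this]

lemma sq_sub_one_fact {Q : ℕ} (hQ : 1 ≤ Q) : Q * Q - 1 = (Q + 1) * (Q - 1) := by
  obtain ⟨Q', rfl⟩ : ∃ Q', Q = Q' + 1 := ⟨Q - 1, by omega⟩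
  have e1 : (Q' + 1 + 1) * (Q' + 1 - 1) = Q' * Q' + 2 * Q' := by
    simp only [Nat.add_sub_cancel]; ring
  have e2 : (Q' + 1) * (Q' + 1) = Q' * Q' + 2 * Q' + 1 := by ring
  omega

lemma exists_pow_card_eq_aux {Q : ℕ} (hQ : 2 ≤ Q) [Field F] [Fintype F]
    (hcard : Fintype.card F = Q * Q) {y : F} (hy : y ≠ 0) (hyQ : y ^ Q = y) :
    ∃ w : F, w ≠ 0 ∧ w ^ (Q + 1) = y := by
  obtain ⟨g, hg⟩ := IsCyclic.exists_generator (α := Fˣ)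
  have hog : orderOf g = Q * Q - 1 := by
    rw [orderOf_eq_card_of_forall_mem_zpowers hg, Nat.card_units, Nat.card_eq_fintype_card, hcard]
  set yu : Fˣ := Units.mk0 y hy with hyu
  obtain ⟨j, hj⟩ := ((isOfFinOrder_of_finite g).mem_powers_iff_mem_zpowers
    (y := yu)).mpr (hg yu)
  simp only at hj
  have hyuQ : yu ^ (Q - 1) = 1 := by
    have h1 : yu ^ Q = yu := by
      ext
      push_cast
      exact hyQ
    have h2 : yu ^ (Q - 1) * yu = yu := by
      rw [← pow_succ]
      have : Q - 1 + 1 = Q := by omega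
      rw [this, h1]
    exact mul_right_cancel (by rw [h2, one_mul])
  have hdvd : Q * Q - 1 ∣ j * (Q - 1) := by
    rw [← hog]
    rw [orderOf_dvd_iff_pow_eq_one, pow_mul, hj, hyuQ]
  have hfact : Q * Q - 1 = (Q + 1) * (Q - 1) := sq_sub_one_fact (by omega)
  have hQ1dvd : Q + 1 ∣ j := by
    rw [hfact] at hdvd
    have hne : 0 < Q - 1 := by omega
    exact (Nat.mul_dvd_mul_iff_right hne).mp hdvd
  obtain ⟨c, rfl⟩ := hQ1dvd
  refine ⟨((g ^ c : Fˣ) : F), Units.ne_zero _, ?_⟩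
  have h3 : ((g ^ c : Fˣ) : F) ^ (Q + 1) = ((g ^ ((Q + 1) * c) : Fˣ) : F) := by
    rw [mul_comm (Q + 1) c, pow_mul]
    push_cast
    rfl
  rw [h3, hj]
  rfl

lemma basisDivisor_leadingCoeff [Field F] {x y : F} :
    (basisDivisor x y).leadingCoeff = (x - y)⁻¹ := by
  rw [basisDivisor, leadingCoeff_mul, leadingCoeff_C, (monic_X_sub_C y).leadingCoeff, mul_one]

lemma basis_coeff_top [Field F] {t : ℕ} (x : Fin t → F) (hx : Function.Injective x) (j : Fin t) :
    (Lagrange.basis Finset.univ x j).coeff (t - 1) =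
      ∏ j' ∈ Finset.univ.erase j, (x j - x j')⁻¹ := by
  have hinj : Set.InjOn x ↑(Finset.univ : Finset (Fin t)) := hx.injOn
  have hnd : (Lagrange.basis Finset.univ x j).natDegree = t - 1 := by
    rw [natDegree_basis hinj (Finset.mem_univ j), Finset.card_univ, Fintype.card_fin]
  rw [← hnd, Polynomial.coeff_natDegree, Lagrange.basis, leadingCoeff_prod]
  exact Finset.prod_congr rfl fun j' hj' => basisDivisor_leadingCoeff

lemma lagrange_zero [Field F] {t : ℕ} (x : Fin t → F) (hx : Function.Injective x) {c : ℕ}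
    (hc : c < t - 1) :
    ∑ j, x j ^ c * ∏ j' ∈ Finset.univ.erase j, (x j - x j')⁻¹ = 0 := by
  have hinj : Set.InjOn x ↑(Finset.univ : Finset (Fin t)) := hx.injOn
  have hX := eq_interpolate (f := (X ^ c : F[X])) hinj (by
    rw [degree_X_pow, Finset.card_univ, Fintype.card_fin]
    exact_mod_cast Nat.lt_of_lt_of_le hc (Nat.sub_le t 1))
  simp only [eval_pow, eval_X] at hX
  have := congrArg (fun P : F[X] => P.coeff (t - 1)) hX
  simp only [interpolate_apply, finset_sum_coeff, coeff_C_mul, coeff_X_pow] at this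
  rw [if_neg (by omega)] at this
  have h2 : ∑ j, x j ^ c * ∏ j' ∈ Finset.univ.erase j, (x j - x j')⁻¹
      = ∑ j : Fin t, x j ^ c * (Lagrange.basis Finset.univ x j).coeff (t - 1) :=
    Finset.sum_congr rfl fun j _ => by rw [basis_coeff_top x hx j]
  rw [h2, ← this]

namespace GRSAux

variable {n k : ℕ} [Field F]

/-- Rows of a GRS generator matrix. -/
def row (k : ℕ) (a v : Fin n → F) : Fin k → (Fin n → F) := fun m i => v i * a i ^ (m : ℕ)

noncomputable def poly (c : Fin k → F) : F[X] := ∑ m : Fin k, Polynomial.C (c m) * X ^ (m : ℕ)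

lemma poly_natDegree_lt (hk : 0 < k) (c : Fin k → F) : (poly c).natDegree < k := by
  apply Nat.lt_of_le_of_lt (Polynomial.natDegree_sum_le _ _)
  rw [Finset.fold_max_lt]
  exact ⟨hk, fun m _ => Nat.lt_of_le_of_lt (natDegree_C_mul_X_pow_le _ _) m.isLt⟩

lemma poly_eval (c : Fin k → F) (x : F) : (poly c).eval x = ∑ m : Fin k, c m * x ^ (m : ℕ) := by
  simp [poly, eval_finset_sum]

lemma poly_coeff (c : Fin k → F) (m : Fin k) : (poly c).coeff (m : ℕ) = c m := by
  rw [poly, finset_sum_coeff]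
  simp only [coeff_C_mul, coeff_X_pow]
  rw [Finset.sum_eq_single m]
  · simp
  · intro b _ hb
    simp only [Fin.val_eq_val]
    rw [if_neg (fun h => hb h.symm), mul_zero]
  · simp

lemma poly_eq (P : F[X]) (hP : P.natDegree < k) :
    poly (fun m : Fin k => P.coeff (m : ℕ)) = P := by
  conv_rhs => rw [P.as_sum_range' k hP]
  rw [poly, Fin.sum_univ_eq_sum_range (fun m => Polynomial.C (P.coeff m) * X ^ m)]
  simp [C_mul_X_pow_eq_monomial]

lemma sum_smul_row (a v : Fin n → F) (c : Fin k → F) :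
    (∑ m, c m • row k a v m) = fun i => v i * (poly c).eval (a i) := by
  funext i
  rw [poly_eval]
  simp only [Finset.sum_apply, Pi.smul_apply, row, smul_eq_mul, Finset.mul_sum]
  exact Finset.sum_congr rfl fun m _ => by ring

lemma mem_span_iff (a v : Fin n → F) (x : Fin n → F) :
    x ∈ Submodule.span F (Set.range (row k a v)) ↔
      ∃ c : Fin k → F, x = fun i => v i * (poly c).eval (a i) := by
  rw [Submodule.mem_span_range_iff_exists_fun]
  constructor
  · rintro ⟨c, hc⟩
    exact ⟨c, by rw [← hc, sum_smul_row]⟩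
  · rintro ⟨c, rfl⟩
    exact ⟨c, sum_smul_row a v c⟩

lemma linIndep (hkn : k ≤ n) (a v : Fin n → F) (ha : Function.Injective a)
    (hv : ∀ i, v i ≠ 0) : LinearIndependent F (row k a v) := by
  rcases Nat.eq_zero_or_pos k with rfl | hk
  · exact linearIndependent_empty_type
  rw [Fintype.linearIndependent_iff]
  intro c hc m
  have hP : poly c = 0 := by
    apply Polynomial.eq_zero_of_natDegree_lt_card_of_eval_eq_zero (poly c) ha
    · intro i
      have := congrFun (sum_smul_row a v c) i
      rw [hc] at this
      have h0 : v i * (poly c).eval (a i) = 0 := by simpa using this.symm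
      rcases mul_eq_zero.mp h0 with h | h
      · exact absurd h (hv i)
      · exact h
    · simpa using Nat.lt_of_lt_of_le (poly_natDegree_lt hk c) hkn
  have := poly_coeff c m
  rw [hP] at this
  simpa using this.symm

lemma hammingNorm_eq (x : Fin n → F) [DecidableEq F] :
    hammingNorm x = n - #{i | x i = 0} := by
  classical
  have h := Finset.card_filter_add_card_filter_not (s := Finset.univ)
    (p := fun i : Fin n => x i = 0)
  simp only [Finset.card_univ, Fintype.card_fin] at h
  rw [hammingNorm]
  simp only [ne_eq] at h ⊢
  omega

lemma card_zeros_le (a v : Fin n → F) (ha : Function.Injective a) (hv : ∀ i, v i ≠ 0)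
    {P : F[X]} (hP : P ≠ 0) [DecidableEq F] :
    #{i | v i * P.eval (a i) = 0} ≤ P.natDegree := by
  classical
  calc #{i | v i * P.eval (a i) = 0} ≤ P.roots.toFinset.card := by
        apply Finset.card_le_card_of_injOn a
        · intro i hi
          simp only [Finset.mem_coe, Finset.mem_filter] at hi ⊢
          rw [Multiset.mem_toFinset, Polynomial.mem_roots hP]
          rcases mul_eq_zero.mp hi.2 with h | h
          · exact absurd h (hv i)
          · exact h
        · exact fun i _ j _ hij => ha hij
    _ ≤ Multiset.card P.roots := Multiset.toFinset_card_le _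
    _ ≤ P.natDegree := Polynomial.card_roots' P

lemma minDist [DecidableEq F] (hk : 0 < k) (hkn : k < n) (a v : Fin n → F)
    (ha : Function.Injective a) (hv : ∀ i, v i ≠ 0) :
    IsMinDist (Submodule.span F (Set.range (row k a v))) (n - k + 1) := by
  have hk1n : k - 1 < n := by omega
  constructor
  · set P : F[X] := ∏ m : Fin (k - 1), (X - Polynomial.C (a (Fin.castLE hk1n.le m))) with hPdef
    have hdeg : P.natDegree = k - 1 := by
      rw [hPdef, natDegree_prod_of_monic _ _ fun m _ => monic_X_sub_C _]
      simp [natDegree_X_sub_C]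
    have hdegk : P.natDegree < k := by omega
    have heval : ∀ y : F, P.eval y = ∏ m : Fin (k - 1), (y - a (Fin.castLE hk1n.le m)) := by
      intro y
      rw [hPdef, eval_prod]
      simp
    have hzero : ∀ i : Fin n, (v i * P.eval (a i) = 0 ↔ (i : ℕ) < k - 1) := by
      intro i
      rw [mul_eq_zero, or_iff_right (hv i), heval, Finset.prod_eq_zero_iff]
      constructor
      · rintro ⟨m, -, hm⟩
        have : i = Fin.castLE hk1n.le m := ha (by rwa [sub_eq_zero] at hm)
        rw [this]
        exact m.isLt
      · intro hi
        refine ⟨⟨(i : ℕ), hi⟩, Finset.mem_univ _, ?_⟩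
        rw [sub_eq_zero]
        congr 1
    set x : Fin n → F := fun i => v i * P.eval (a i) with hx
    refine ⟨x, ?_, ?_, ?_⟩
    · rw [mem_span_iff]
      exact ⟨fun m => P.coeff (m : ℕ), by rw [poly_eq P hdegk]⟩
    · intro h0
      have := congrFun h0 ⟨k - 1, hk1n⟩
      rw [hx] at this
      simp only [Pi.zero_apply] at this
      rw [hzero ⟨k - 1, hk1n⟩] at this
      simp only [Fin.val_mk] at this
      omega
    · rw [hammingNorm_eq]
      have hcard : #{i : Fin n | x i = 0} = k - 1 := by
        have : ({i : Fin n | x i = 0} : Finset (Fin n)) = Finset.Iio ⟨k - 1, hk1n⟩ := by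
          ext i
          simp only [Finset.mem_filter, Finset.mem_univ, true_and, Finset.mem_Iio]
          rw [hx]
          simp only
          rw [hzero i]
          exact Iff.symm (Fin.lt_def.trans Iff.rfl)
        rw [this, Fin.card_Iio]
      rw [hcard]
      omega
  · intro x hx hx0
    rw [mem_span_iff] at hx
    obtain ⟨c, rfl⟩ := hx
    have hP : poly c ≠ 0 := by
      intro h
      apply hx0
      funext i
      rw [h]
      simp
    have hz := card_zeros_le a v ha hv hP
    have hd := poly_natDegree_lt hk c
    have hnorm := hammingNorm_eq (fun i => v i * (poly c).eval (a i)) (F := F)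
    rw [hnorm]
    omega

lemma mem_galoisDual {p e : ℕ} {C : Submodule F (Fin n → F)} {x : Fin n → F} :
    x ∈ galoisDual p e C ↔ ∀ c ∈ C, ∑ i, x i * c i ^ p ^ e = 0 := Iff.rfl

lemma le_galoisDual (p e : ℕ) [Fact p.Prime] [CharP F p] (a v : Fin n → F)
    (hsum : ∀ l m : Fin k, ∑ i, row k a v l i * (row k a v m i) ^ p ^ e = 0) :
    Submodule.span F (Set.range (row k a v)) ≤
      galoisDual p e (Submodule.span F (Set.range (row k a v))) := by
  rw [Submodule.span_le]
  rintro x ⟨l, rfl⟩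
  rw [SetLike.mem_coe, mem_galoisDual]
  intro c hc
  induction hc using Submodule.span_induction with
  | mem c hcs =>
    obtain ⟨m, rfl⟩ := hcs
    exact hsum l m
  | zero =>
    have hpe : p ^ e ≠ 0 := (pow_pos (Nat.Prime.pos (Fact.out : p.Prime)) e).ne'
    simp [zero_pow hpe]
  | add x y hx hy ihx ihy =>
    simp only [Pi.add_apply]
    have : ∀ i, (x i + y i) ^ p ^ e = x i ^ p ^ e + y i ^ p ^ e :=
      fun i => add_pow_char_pow (x i) (y i) p e
    simp only [this, mul_add, Finset.sum_add_distrib, ihx, ihy, add_zero]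
  | smul r x hx ih =>
    simp only [Pi.smul_apply, smul_eq_mul, mul_pow]
    calc ∑ i, row k a v l i * (r ^ p ^ e * x i ^ p ^ e)
        = r ^ p ^ e * ∑ i, row k a v l i * x i ^ p ^ e := by
          rw [Finset.mul_sum]; exact Finset.sum_congr rfl fun i _ => by ring
      _ = 0 := by rw [ih, mul_zero]

end GRSAux

end Auxiliary

/-- Theorem (first class of Hermitian self-orthogonal MDS codes): let `q = p^h` with `h` even,
`√q = p^{h/2}`, `n' ∣ q - 1`, `n₁ = n' / gcd(n', √q + 1)`, `1 ≤ t ≤ (√q - 1)/n₁` and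
`n = t·n'`. Then for each `1 ≤ k ≤ ⌊(√q + n'(t-1))/(√q + 1)⌋` there exists an
`[n, k, n-k+1]_q` Hermitian self-orthogonal (MDS) code. -/
theorem exists_hermitian_selfOrthogonal_MDS_first
    (p h : ℕ) (hp : p.Prime) (hh : 0 < h) (heven : Even h)
    [Field F] [Fintype F] [DecidableEq F] (hcard : Fintype.card F = p ^ h)
    (n' t n k : ℕ) (hn'pos : 0 < n') (hn' : n' ∣ p ^ h - 1)
    (ht1 : 1 ≤ t) (ht2 : t ≤ (p ^ (h / 2) - 1) / (n' / Nat.gcd n' (p ^ (h / 2) + 1)))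
    (hn : n = t * n')
    (hk1 : 1 ≤ k) (hk2 : k ≤ (p ^ (h / 2) + n' * (t - 1)) / (p ^ (h / 2) + 1)) :
    ∃ C : Submodule F (Fin n → F),
      C ≤ galoisDual p (h / 2) C ∧ Module.finrank F C = k ∧
        IsMinDist C (n - k + 1) := by
  classical
  haveI : Fact p.Prime := ⟨hp⟩
  set e := h / 2 with hedef
  set Q := p ^ e with hQdef
  have he1 : 1 ≤ e := by
    have := Nat.even_iff.mp heven
    omega
  have hQ2 : 2 ≤ Q := hp.two_le.trans (Nat.le_self_pow (by omega : e ≠ 0) p)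
  have hq : p ^ h = Q * Q := by
    rw [hQdef, ← pow_add]
    congr 1
    have := Nat.even_iff.mp heven
    omega
  haveI : CharP F p := charP_of_card_aux hp hh hcard
  have hcard' : Fintype.card F = Q * Q := by rw [hcard, hq]
  have hfact : Q * Q - 1 = (Q + 1) * (Q - 1) := sq_sub_one_fact (by omega)
  set q1 := Q * Q - 1 with hq1def
  have hq1pos : 0 < q1 := by
    have : 2 * 2 ≤ Q * Q := Nat.mul_le_mul hQ2 hQ2
    omega
  have hn'q1 : n' ∣ q1 := by rw [hq1def, ← hq]; exact hn'
  -- numeric consequences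
  have hkmul : k * (Q + 1) ≤ Q + n' * (t - 1) := (Nat.le_div_iff_mul_le (by omega)).mp hk2
  have hexp : k * (Q + 1) = k * Q + k := by ring
  have hQk : Q ≤ k * Q := Nat.le_mul_of_pos_left Q hk1
  have hkn1 : k ≤ n' * (t - 1) := by omega
  have hkn : k < n := by
    have h1 : n' * (t - 1) < t * n' := by
      calc n' * (t - 1) = (t - 1) * n' := mul_comm _ _
        _ < t * n' := (Nat.mul_lt_mul_right hn'pos).mpr (by omega)
    omega
  have hkey : (k - 1) * (Q + 1) + 1 ≤ n' * (t - 1) := by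
    have h1 : (k - 1) * (Q + 1) = k * (Q + 1) - 1 * (Q + 1) := by rw [← Nat.sub_mul]
    have h2 : 1 * (Q + 1) = Q + 1 := one_mul _
    omega
  -- cyclic group of units
  obtain ⟨g, hg⟩ := IsCyclic.exists_generator (α := Fˣ)
  have hog : orderOf g = q1 := by
    rw [orderOf_eq_card_of_forall_mem_zpowers hg, Nat.card_units, Nat.card_eq_fintype_card,
      hcard', hq1def]
  have hgq1 : g ^ q1 = 1 := by rw [← hog]; exact pow_orderOf_eq_one g
  -- parameters
  set d := Nat.gcd n' (Q + 1) with hddef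
  set n₁ := n' / d with hn1def
  set sc := (Q + 1) / d with hscdef
  have hdpos : 0 < d := Nat.gcd_pos_of_pos_left _ hn'pos
  have hn1pos : 0 < n₁ := Nat.div_pos (Nat.le_of_dvd hn'pos (Nat.gcd_dvd_left _ _)) hdpos
  have hsn' : sc * n' = (Q + 1) * n₁ := by
    have h1 : d * n₁ = n' := Nat.mul_div_cancel' (Nat.gcd_dvd_left _ _)
    have h2 : sc * d = Q + 1 := Nat.div_mul_cancel (Nat.gcd_dvd_right _ _)
    calc sc * n' = sc * (d * n₁) := by rw [h1]
      _ = sc * d * n₁ := by ring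
      _ = (Q + 1) * n₁ := by rw [h2]
  set M := q1 / n' with hMdef
  have hMmul : n' * M = q1 := Nat.mul_div_cancel' hn'q1
  have hMpos : 0 < M := Nat.div_pos (Nat.le_of_dvd hq1pos hn'q1) hn'pos
  set θu := g ^ M with hθdef
  have hθord : orderOf θu = n' := by
    rw [hθdef, orderOf_pow, hog, Nat.gcd_comm, Nat.gcd_eq_left (Dvd.intro_left n' hMmul),
      ← hMmul, Nat.mul_div_cancel _ hMpos]
  set ζu := g ^ ((Q + 1) * n₁) with hζdef
  have hordζ : t ≤ orderOf ζu := by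
    rw [hζdef, orderOf_pow, hog]
    have hggdvd : Nat.gcd q1 ((Q + 1) * n₁) ∣ (Q + 1) * n₁ := Nat.gcd_dvd_right _ _
    have hggpos : 0 < Nat.gcd q1 ((Q + 1) * n₁) := Nat.gcd_pos_of_pos_left _ hq1pos
    have hQn1pos : 0 < (Q + 1) * n₁ := by positivity
    have hstep : (Q - 1) / n₁ ≤ q1 / ((Q + 1) * n₁) := by
      rw [Nat.le_div_iff_mul_le hQn1pos]
      have h1 : (Q - 1) / n₁ * n₁ ≤ Q - 1 := Nat.div_mul_le_self _ _
      calc (Q - 1) / n₁ * ((Q + 1) * n₁) = (Q - 1) / n₁ * n₁ * (Q + 1) := by ring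
        _ ≤ (Q - 1) * (Q + 1) := Nat.mul_le_mul_right _ h1
        _ = q1 := (mul_comm _ _).trans hfact.symm
    have hstep2 : q1 / ((Q + 1) * n₁) ≤ q1 / Nat.gcd q1 ((Q + 1) * n₁) :=
      Nat.div_le_div_left (Nat.le_of_dvd hQn1pos hggdvd) hggpos
    exact le_trans (le_trans ht2 hstep) hstep2
  -- elements of F
  set gF : F := ((g : Fˣ) : F) with hgF
  set θF : F := ((θu : Fˣ) : F) with hθF
  set ζF : F := ((ζu : Fˣ) : F) with hζF
  have hθFpow : θF = gF ^ M := by rw [hθF, hθdef, hgF, Units.val_pow_eq_pow_val]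
  have hζFpow : ζF = gF ^ ((Q + 1) * n₁) := by rw [hζF, hζdef, hgF, Units.val_pow_eq_pow_val]
  have hθn' : θF ^ n' = 1 := by
    rw [hθF, ← Units.val_pow_eq_pow_val, ← hθord, pow_orderOf_eq_one, Units.val_one]
  have hgFq1 : gF ^ q1 = 1 := by
    rw [hgF, ← Units.val_pow_eq_pow_val, hgq1, Units.val_one]
  have hζfix : ζF ^ Q = ζF := by
    have h1 : ζF ^ (Q - 1) = 1 := by
      rw [hζFpow, ← pow_mul]
      have hexp2 : (Q + 1) * n₁ * (Q - 1) = q1 * n₁ := by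
        calc (Q + 1) * n₁ * (Q - 1) = (Q + 1) * (Q - 1) * n₁ := by ring
          _ = q1 * n₁ := congrArg (· * n₁) hfact.symm
      rw [hexp2, pow_mul, hgFq1, one_pow]
    calc ζF ^ Q = ζF ^ (Q - 1 + 1) := by congr 1; omega
      _ = ζF ^ (Q - 1) * ζF := pow_succ _ _
      _ = ζF := by rw [h1, one_mul]
  -- the x-points
  set xF : Fin t → F := fun j => ζF ^ (j : ℕ) with hxF
  have hxinj : Function.Injective xF := by
    intro j j' hjj
    have hu : ζu ^ (j : ℕ) = ζu ^ (j' : ℕ) := by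
      ext
      rw [Units.val_pow_eq_pow_val, Units.val_pow_eq_pow_val]
      exact hjj
    have := pow_injOn_Iio_orderOf (x := ζu)
      (Set.mem_Iio.mpr (lt_of_lt_of_le j.isLt hordζ))
      (Set.mem_Iio.mpr (lt_of_lt_of_le j'.isLt hordζ)) hu
    exact Fin.ext this
  have hxfix : ∀ j, xF j ^ Q = xF j := by
    intro j
    rw [hxF]
    simp only
    rw [← pow_mul, mul_comm, pow_mul, hζfix]
  -- the u-weights
  set u : Fin t → F := fun j => ∏ j' ∈ Finset.univ.erase j, (xF j - xF j')⁻¹ with hu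
  have hu0 : ∀ j, u j ≠ 0 := by
    intro j
    rw [hu]
    simp only
    rw [Finset.prod_ne_zero_iff]
    intro j' hj'
    exact inv_ne_zero (sub_ne_zero.mpr fun hh' =>
      (Finset.mem_erase.mp hj').1 (hxinj hh').symm)
  have huQ : ∀ j, u j ^ Q = u j := by
    intro j
    rw [hu]
    simp only
    rw [← Finset.prod_pow]
    refine Finset.prod_congr rfl fun j' _ => ?_
    rw [inv_pow, hQdef, sub_pow_char_pow, ← hQdef, hxfix, hxfix]
  -- the column multipliers
  have hwex : ∀ j, ∃ w : F, w ≠ 0 ∧ w ^ (Q + 1) = u j := fun j =>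
    exists_pow_card_eq_aux hQ2 hcard' (hu0 j) (huQ j)
  choose w hw0 hwpow using hwex
  -- evaluation points
  set E : Fin t × Fin n' ≃ Fin n := finProdFinEquiv.trans (finCongr hn.symm) with hE
  set BF : F := gF ^ sc with hBF
  have hBn' : BF ^ n' = ζF := by
    rw [hBF, ← pow_mul, hsn', hζFpow]
  have hBF0 : BF ≠ 0 := by
    rw [hBF, hgF, ← Units.val_pow_eq_pow_val]
    exact Units.ne_zero _
  set A : Fin t × Fin n' → F := fun ji => BF ^ (ji.1 : ℕ) * θF ^ (ji.2 : ℕ) with hA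
  have hAinj : Function.Injective A := by
    rintro ⟨j, i⟩ ⟨j', i'⟩ hEq
    simp only [hA] at hEq
    have hjj : j = j' := by
      have h1 : xF j = xF j' := by
        have := congrArg (fun z : F => z ^ n') hEq
        have h2 : ∀ (z : F) (mm : ℕ), (z ^ mm) ^ n' = (z ^ n') ^ mm :=
          fun z mm => pow_right_comm z mm n'
        have hBn'2 : (gF ^ n') ^ sc = ζF := by rw [pow_right_comm]; exact hBn'
        simp only [mul_pow, h2, hBn'2, hθn', one_pow, mul_one] at this
        rw [hxF]
        simpa [hBn'] using this
      exact hxinj h1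
    subst hjj
    have hii : θF ^ (i : ℕ) = θF ^ (i' : ℕ) := mul_left_cancel₀ (pow_ne_zero _ hBF0) hEq
    have hiu : θu ^ (i : ℕ) = θu ^ (i' : ℕ) := by
      ext
      rw [Units.val_pow_eq_pow_val, Units.val_pow_eq_pow_val]
      exact hii
    have : (i : ℕ) = (i' : ℕ) := pow_injOn_Iio_orderOf (x := θu)
      (Set.mem_Iio.mpr (by rw [hθord]; exact i.isLt))
      (Set.mem_Iio.mpr (by rw [hθord]; exact i'.isLt)) hiu
    exact Prod.ext rfl (Fin.ext this)
  set a : Fin n → F := fun i => A (E.symm i) with ha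
  set v : Fin n → F := fun i => w (E.symm i).1 with hv
  have hainj : Function.Injective a := hAinj.comp E.symm.injective
  have hv0 : ∀ i, v i ≠ 0 := fun i => hw0 _
  -- the key orthogonality sums
  have hsum : ∀ l m : Fin k,
      ∑ i, GRSAux.row k a v l i * (GRSAux.row k a v m i) ^ p ^ e = 0 := by
    intro l m
    have hQe : p ^ e = Q := rfl
    rw [hQe]
    set S := (l : ℕ) + (m : ℕ) * Q with hS
    have hterm : ∀ i : Fin n,
        GRSAux.row k a v l i * (GRSAux.row k a v m i) ^ Q
          = u (E.symm i).1 * A (E.symm i) ^ S := by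
      intro i
      simp only [GRSAux.row, ha, hv]
      rw [← hwpow (E.symm i).1]
      rw [hS]
      ring
    rw [Finset.sum_congr rfl fun i _ => hterm i]
    have hre : ∑ i : Fin n, u (E.symm i).1 * A (E.symm i) ^ S
        = ∑ ji : Fin t × Fin n', u ji.1 * A ji ^ S :=
      Fintype.sum_equiv E.symm (fun i => u (E.symm i).1 * A (E.symm i) ^ S)
        (fun ji => u ji.1 * A ji ^ S) (fun i => rfl)
    rw [hre, Fintype.sum_prod_type]
    have hAji : ∀ (j : Fin t) (i : Fin n'),
        A (j, i) ^ S = (BF ^ (j : ℕ)) ^ S * (θF ^ S) ^ (i : ℕ) := by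
      intro j i
      rw [hA]
      simp only
      rw [mul_pow, pow_right_comm θF (i : ℕ) S]
    have hinner : ∀ j : Fin t, ∑ i : Fin n', u j * A (j, i) ^ S
        = u j * (BF ^ (j : ℕ)) ^ S * ∑ i : Fin n', (θF ^ S) ^ (i : ℕ) := by
      intro j
      rw [Finset.mul_sum]
      exact Finset.sum_congr rfl fun i _ => by rw [hAji]; ring
    rw [Finset.sum_congr rfl fun j _ => hinner j]
    by_cases hθS : θF ^ S = 1
    · -- `n' ∣ S`: reduce to the Lagrange identity
      have hθuS : θu ^ S = 1 := Units.ext (by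
        rw [Units.val_pow_eq_pow_val, Units.val_one]
        exact hθS)
      have hdvdS : n' ∣ S := by
        rw [← hθord, orderOf_dvd_iff_pow_eq_one]
        exact hθuS
      obtain ⟨c, hc⟩ := hdvdS
      have hclt : c < t - 1 := by
        have hlk := l.isLt
        have hmk := m.isLt
        have hmQ : (m : ℕ) * Q ≤ (k - 1) * Q := Nat.mul_le_mul_right _ (by omega)
        have hco : (k - 1) * (Q + 1) = (k - 1) * Q + (k - 1) := by ring
        have hSle : S ≤ (k - 1) * (Q + 1) := by omega
        have hlt : n' * c < n' * (t - 1) := by omega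
        exact lt_of_mul_lt_mul_left hlt (Nat.zero_le n')
      have hBjS : ∀ j : Fin t, (BF ^ (j : ℕ)) ^ S = xF j ^ c := by
        intro j
        rw [hc]
        calc (BF ^ (j : ℕ)) ^ (n' * c) = ((BF ^ n') ^ (j : ℕ)) ^ c := by
              simp only [← pow_mul]
              congr 1
              ring
          _ = xF j ^ c := by rw [hBn', hxF]
      calc ∑ j : Fin t, u j * (BF ^ (j : ℕ)) ^ S * ∑ i : Fin n', (θF ^ S) ^ (i : ℕ)
          = ∑ j : Fin t, xF j ^ c * u j * ∑ i : Fin n', (θF ^ S) ^ (i : ℕ) :=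
            Finset.sum_congr rfl fun j _ => by rw [hBjS]; ring
        _ = (∑ j : Fin t, xF j ^ c * u j) * ∑ i : Fin n', (θF ^ S) ^ (i : ℕ) :=
            (Finset.sum_mul _ _ _).symm
        _ = 0 := by
            have hlz := lagrange_zero xF hxinj hclt
            have hz : (∑ j : Fin t, xF j ^ c * u j) = 0 := by
              simp only [hu]
              exact hlz
            rw [hz, zero_mul]
    · -- geometric sum vanishes
      have hgeom : ∑ i : Fin n', (θF ^ S) ^ (i : ℕ) = 0 := by
        rw [Fin.sum_univ_eq_sum_range (fun i => (θF ^ S) ^ i)]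
        rw [geom_sum_eq hθS]
        have h1 : (θF ^ S) ^ n' = 1 := by
          rw [← pow_mul, mul_comm, pow_mul, hθn', one_pow]
        rw [h1, sub_self, zero_div]
      calc ∑ j : Fin t, u j * (BF ^ (j : ℕ)) ^ S * ∑ i : Fin n', (θF ^ S) ^ (i : ℕ)
          = ∑ j : Fin t, (0 : F) :=
            Finset.sum_congr rfl fun j _ => by rw [hgeom, mul_zero]
        _ = 0 := Finset.sum_const_zero
  -- assemble
  refine ⟨Submodule.span F (Set.range (GRSAux.row k a v)), ?_, ?_, ?_⟩
  · exact GRSAux.le_galoisDual p e a v hsum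
  · rw [finrank_span_eq_card (GRSAux.linIndep hkn.le a v hainj hv0)]
    simp
  · exact GRSAux.minDist hk1 hkn a v hainj hv0
end
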